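/- Let θ ∈ [0,1], α ∈ ℝ, and let (W_j)_{j∈ℤ} be a sequence with values in {−1,1} such that sup{j : W_j = 1} = sup{j : W_j = −1} = ∞. Define G_j := W_j if (α − Σ_{k<j} W_k·2^{k+θ-1} + 2^{j+θ-1}) mod 2^{j+θ+1} ∈ [0, 2^{j+θ}), and G_j := −W_j otherwise. Then for every j ∈ ℤ, ⌊2^{−(j+θ)}·(α − Σ_{k<j} W_k·2^{k+θ-1}) + 1/2⌋ = Σ_{k≥j} (W_k − G_k)·2^{k−j−1}. -/

import Mathlib

open Real

/-- `a mod b := a - b * ⌊a / b⌋` for real numbers. -/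
noncomputable def realMod (a b : ℝ) : ℝ := a - b * ⌊a / b⌋

lemma fract_lt_half_iff (y : ℝ) : Int.fract y < 1/2 ↔ Even ⌊2*y⌋ := by
  have h2y : 2*y = Int.fract y * 2 + ((2*⌊y⌋ : ℤ) : ℝ) := by
    push_cast [Int.fract]; ring
  have hfl : ⌊2*y⌋ = ⌊Int.fract y * 2⌋ + 2*⌊y⌋ := by
    rw [h2y, Int.floor_add_intCast]
  have h0 := Int.fract_nonneg y
  have h1 := Int.fract_lt_one y
  rcases lt_or_ge (Int.fract y) (1/2) with h | h
  · have he : ⌊Int.fract y * 2⌋ = 0 := by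
      rw [Int.floor_eq_iff] <;> push_cast <;> constructor <;> linarith
    constructor
    · intro _; rw [Int.even_iff, hfl, he]; omega
    · intro _; exact h
  · have he : ⌊Int.fract y * 2⌋ = 1 := by
      rw [Int.floor_eq_iff] <;> push_cast <;> constructor <;> linarith
    constructor
    · intro hc; exact absurd hc (not_lt.mpr h)
    · intro hc; rw [Int.even_iff, hfl, he] at hc; omega

lemma step_aux (x w g : ℝ) (hw : w = -1 ∨ w = 1)
    (hg : g = if Even ⌊x + 1/2⌋ then w else -w) :
    (⌊x + 1/2⌋ : ℝ) = (w - g)/2 + 2 * ⌊x/2 - w/4 + 1/2⌋ := by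
  have h1 : ((⌊x+1/2⌋:ℤ):ℝ) ≤ x+1/2 := Int.floor_le _
  have h2 : x+1/2 < ⌊x+1/2⌋+1 := Int.lt_floor_add_one _
  rcases Int.even_or_odd ⌊x + 1/2⌋ with ⟨m, hm⟩ | ⟨m, hm⟩
  · rw [if_pos ⟨m, hm⟩] at hg
    subst hg
    rcases hw with hw | hw <;> subst hw <;> rw [hm] at h1 h2 ⊢ <;> push_cast at h1 h2 ⊢
    · have : ⌊x/2 - (-1)/4 + 1/2⌋ = m := by
        rw [Int.floor_eq_iff]; constructor <;> push_cast <;> linarith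
      rw [this]; push_cast; ring
    · have : ⌊x/2 - 1/4 + 1/2⌋ = m := by
        rw [Int.floor_eq_iff]; constructor <;> push_cast <;> linarith
      rw [this]; push_cast; ring
  · have ho : ¬ Even ⌊x+1/2⌋ := by
      rw [Int.even_iff]; omega
    rw [if_neg ho] at hg
    subst hg
    rcases hw with hw | hw <;> subst hw <;> rw [hm] at h1 h2 ⊢ <;> push_cast at h1 h2 ⊢
    · have : ⌊x/2 - (-1)/4 + 1/2⌋ = m+1 := by
        rw [Int.floor_eq_iff]; constructor <;> push_cast <;> linarith
      rw [this]; push_cast; ring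
    · have : ⌊x/2 - 1/4 + 1/2⌋ = m := by
        rw [Int.floor_eq_iff]; constructor <;> push_cast <;> linarith
      rw [this]; push_cast; ring

lemma rpow_succ' (a : ℝ) : (2:ℝ)^(a+1) = 2*(2:ℝ)^a := by
  rw [Real.rpow_add two_pos, Real.rpow_one]; ring

lemma rpow_pred' (a : ℝ) : (2:ℝ)^(a-1) = (2:ℝ)^a / 2 := by
  rw [Real.rpow_sub two_pos, Real.rpow_one]

/-- The partial sum `Σ_{k<j} W_k 2^{k+θ-1}`. -/
noncomputable def Spart (θ : ℝ) (W : ℤ → ℝ) (j : ℤ) : ℝ :=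
  ∑' k : ℤ, if k < j then W k * (2:ℝ) ^ ((k:ℝ) + θ - 1) else 0

lemma bnd_summable (θ : ℝ) (j : ℤ) :
    Summable (fun k : ℤ => if k < j then (2:ℝ) ^ ((k:ℝ) + θ - 1) else 0) ∧
    (∑' k : ℤ, if k < j then (2:ℝ) ^ ((k:ℝ) + θ - 1) else 0) = (2:ℝ) ^ ((j:ℝ) + θ - 1) := by
  set f : ℤ → ℝ := fun k => if k < j then (2:ℝ) ^ ((k:ℝ) + θ - 1) else 0 with hf
  set i : ℕ → ℤ := fun n => j - 1 - n with hi
  have hinj : Function.Injective i := by intro a b h; simp [hi] at h; omega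
  have hzero : ∀ x ∉ Set.range i, f x = 0 := by
    intro x hx
    have : ¬ x < j := by
      intro hlt
      exact hx ⟨(j - 1 - x).toNat, by simp [hi]; omega⟩
    simp [hf, this]
  have hcomp : ∀ n : ℕ, f (i n) = (2:ℝ) ^ ((j:ℝ) + θ - 2) * (1/2:ℝ)^n := by
    intro n
    have hlt : i n < j := by simp [hi]; omega
    have he : ((i n : ℤ):ℝ) + θ - 1 = ((j:ℝ) + θ - 2) - n := by simp [hi]; push_cast; ring
    rw [hf]; simp only [if_pos hlt, he]
    rw [Real.rpow_sub two_pos, Real.rpow_natCast, div_eq_mul_inv, ← inv_pow]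
    norm_num
  have hgs : Summable (fun n : ℕ => (2:ℝ) ^ ((j:ℝ) + θ - 2) * (1/2:ℝ)^n) :=
    (summable_geometric_of_lt_one (by norm_num) (by norm_num)).mul_left _
  have hsum : Summable f := by
    rw [← hinj.summable_iff hzero]
    exact hgs.congr (fun n => (hcomp n).symm)
  refine ⟨hsum, ?_⟩
  have hsupp : Function.support f ⊆ Set.range i := by
    intro x hx
    by_contra hc
    exact hx (hzero x hc)
  rw [← hinj.tsum_eq hsupp, tsum_congr hcomp, tsum_mul_left, tsum_geometric_two]
  rw [show ((j:ℝ) + θ - 1) = ((j:ℝ) + θ - 2) + 1 by ring, Real.rpow_add two_pos,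
    Real.rpow_one]

lemma Spart_summable (θ : ℝ) (W : ℤ → ℝ) (hW : ∀ j, W j = -1 ∨ W j = 1) (j : ℤ) :
    Summable (fun k : ℤ => if k < j then W k * (2:ℝ) ^ ((k:ℝ) + θ - 1) else 0) := by
  refine Summable.of_norm_bounded (bnd_summable θ j).1 ?_
  intro k
  by_cases hk : k < j
  · simp only [if_pos hk]
    rw [norm_mul]
    have : ‖W k‖ = 1 := by rcases hW k with h | h <;> simp [h]
    rw [this, one_mul]
    rw [Real.norm_eq_abs, abs_of_nonneg (Real.rpow_nonneg (by norm_num) _)]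
  · simp [hk]

lemma Spart_rec (θ : ℝ) (W : ℤ → ℝ) (hW : ∀ j, W j = -1 ∨ W j = 1) (j : ℤ) :
    Spart θ W (j+1) = Spart θ W j + W j * (2:ℝ) ^ ((j:ℝ) + θ - 1) := by
  have hpt : (fun k : ℤ => if k < j+1 then W k * (2:ℝ) ^ ((k:ℝ) + θ - 1) else 0)
      = fun k => (if k < j then W k * (2:ℝ) ^ ((k:ℝ) + θ - 1) else 0)
        + (if k = j then W j * (2:ℝ) ^ ((j:ℝ) + θ - 1) else 0) := by
    funext k
    rcases lt_trichotomy k j with h | h | h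
    · rw [if_pos (by omega), if_pos h, if_neg (by omega), add_zero]
    · subst h
      rw [if_pos (by omega), if_neg (by omega), if_pos rfl, zero_add]
    · rw [if_neg (by omega), if_neg (by omega), if_neg (by omega), add_zero]
  have hsingle : Summable (fun k : ℤ => if k = j then W j * (2:ℝ) ^ ((j:ℝ) + θ - 1) else 0) :=
    summable_of_ne_finset_zero (s := {j}) (by intro k hk; simp at hk; simp [hk])
  rw [Spart, hpt, Summable.tsum_add (Spart_summable θ W hW j) hsingle, tsum_ite_eq]
  rfl

lemma Spart_le (θ : ℝ) (W : ℤ → ℝ) (hW : ∀ j, W j = -1 ∨ W j = 1) (j N : ℤ)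
    (hjN : j < N) (hWj : W j = -1) :
    Spart θ W N ≤ (2:ℝ) ^ ((N:ℝ) + θ - 1) - 2 * (2:ℝ) ^ ((j:ℝ) + θ - 1) := by
  have hsingle : Summable (fun k : ℤ => if k = j then 2 * (2:ℝ) ^ ((j:ℝ) + θ - 1) else 0) :=
    summable_of_ne_finset_zero (s := {j}) (by intro k hk; simp at hk; simp [hk])
  have hle : ∀ k : ℤ, (if k < N then W k * (2:ℝ) ^ ((k:ℝ) + θ - 1) else 0)
      ≤ (if k < N then (2:ℝ) ^ ((k:ℝ) + θ - 1) else 0)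
        - (if k = j then 2 * (2:ℝ) ^ ((j:ℝ) + θ - 1) else 0) := by
    intro k
    have hpos : (0:ℝ) < (2:ℝ) ^ ((k:ℝ) + θ - 1) := Real.rpow_pos_of_pos two_pos _
    by_cases hk : k = j
    · subst hk
      rw [if_pos hjN, if_pos hjN, if_pos rfl, hWj]
      linarith
    · rw [if_neg hk, sub_zero]
      by_cases hkN : k < N
      · rw [if_pos hkN, if_pos hkN]
        have : W k ≤ 1 := by rcases hW k with h | h <;> simp [h]
        nlinarith
      · simp [hkN]
  have := Summable.tsum_le_tsum hle (Spart_summable θ W hW N) (((bnd_summable θ N).1).sub hsingle)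
  rw [Summable.tsum_sub (bnd_summable θ N).1 hsingle, tsum_ite_eq, (bnd_summable θ N).2] at this
  exact this

lemma Spart_ge (θ : ℝ) (W : ℤ → ℝ) (hW : ∀ j, W j = -1 ∨ W j = 1) (j N : ℤ)
    (hjN : j < N) (hWj : W j = 1) :
    2 * (2:ℝ) ^ ((j:ℝ) + θ - 1) - (2:ℝ) ^ ((N:ℝ) + θ - 1) ≤ Spart θ W N := by
  have hsingle : Summable (fun k : ℤ => if k = j then 2 * (2:ℝ) ^ ((j:ℝ) + θ - 1) else 0) :=
    summable_of_ne_finset_zero (s := {j}) (by intro k hk; simp at hk; simp [hk])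
  have hle : ∀ k : ℤ, (if k = j then 2 * (2:ℝ) ^ ((j:ℝ) + θ - 1) else 0)
        - (if k < N then (2:ℝ) ^ ((k:ℝ) + θ - 1) else 0)
      ≤ (if k < N then W k * (2:ℝ) ^ ((k:ℝ) + θ - 1) else 0) := by
    intro k
    have hpos : (0:ℝ) < (2:ℝ) ^ ((k:ℝ) + θ - 1) := Real.rpow_pos_of_pos two_pos _
    by_cases hk : k = j
    · subst hk
      rw [if_pos hjN, if_pos hjN, if_pos rfl, hWj]
      linarith
    · rw [if_neg hk, zero_sub]
      by_cases hkN : k < N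
      · rw [if_pos hkN, if_pos hkN]
        have : -1 ≤ W k := by rcases hW k with h | h <;> simp [h]
        nlinarith
      · simp [hkN]
  have := Summable.tsum_le_tsum hle (hsingle.sub ((bnd_summable θ N).1)) (Spart_summable θ W hW N)
  rw [Summable.tsum_sub hsingle (bnd_summable θ N).1, tsum_ite_eq, (bnd_summable θ N).2] at this
  exact this

/-- `x_j = 2^{-(j+θ)} (α - S_j)`. -/
noncomputable def xval (θ α : ℝ) (W : ℤ → ℝ) (t : ℤ) : ℝ :=
  (2:ℝ) ^ (-((t:ℝ) + θ)) * (α - Spart θ W t)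

noncomputable def nval (θ α : ℝ) (W : ℤ → ℝ) (t : ℤ) : ℤ := ⌊xval θ α W t + 1/2⌋

lemma xval_eq (θ α : ℝ) (W : ℤ → ℝ) (t : ℤ) :
    xval θ α W t = (α - Spart θ W t) / (2:ℝ) ^ ((t:ℝ) + θ) := by
  rw [xval, Real.rpow_neg (by norm_num)]
  ring

lemma xval_succ (θ α : ℝ) (W : ℤ → ℝ) (hW : ∀ j, W j = -1 ∨ W j = 1) (t : ℤ) :
    xval θ α W (t+1) = xval θ α W t / 2 - W t / 4 := by
  have hpos : (0:ℝ) < (2:ℝ) ^ ((t:ℝ) + θ) := Real.rpow_pos_of_pos two_pos _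
  rw [xval_eq, xval_eq, Spart_rec θ W hW t, rpow_pred']
  have hc : (((t+1 : ℤ)):ℝ) + θ = ((t:ℝ) + θ) + 1 := by push_cast; ring
  rw [hc, rpow_succ']
  field_simp
  ring

lemma G_char (θ α : ℝ) (W : ℤ → ℝ) (G : ℤ → ℝ) (t : ℤ)
    (hGt : G t = if realMod (α - Spart θ W t + (2:ℝ) ^ ((t:ℝ) + θ - 1))
          ((2:ℝ) ^ ((t:ℝ) + θ + 1)) ∈ Set.Ico (0:ℝ) ((2:ℝ) ^ ((t:ℝ) + θ))
        then W t else -W t) :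
    G t = if Even (nval θ α W t) then W t else -W t := by
  have hP : (0:ℝ) < (2:ℝ) ^ ((t:ℝ) + θ) := Real.rpow_pos_of_pos two_pos _
  set P : ℝ := (2:ℝ) ^ ((t:ℝ) + θ) with hPdef
  set a : ℝ := α - Spart θ W t + (2:ℝ) ^ ((t:ℝ) + θ - 1) with hadef
  have hb : (2:ℝ) ^ ((t:ℝ) + θ + 1) = 2 * P := rpow_succ' _
  have ha : a = (α - Spart θ W t) + P / 2 := by rw [hadef, rpow_pred']
  have hb0 : (2*P) ≠ 0 := by positivity
  have hq : 2 * (a / (2*P)) = xval θ α W t + 1/2 := by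
    rw [xval_eq, ha, ← hPdef]
    field_simp
  have hfr : realMod a (2*P) = (2*P) * Int.fract (a / (2*P)) := by
    rw [realMod, Int.fract, mul_sub, mul_div_cancel₀ _ hb0]
  have hcond : (realMod a ((2:ℝ) ^ ((t:ℝ) + θ + 1)) ∈ Set.Ico (0:ℝ) P) ↔ Even (nval θ α W t) := by
    rw [hb, hfr, Set.mem_Ico]
    have hf0 := Int.fract_nonneg (a / (2*P))
    have hf1 := Int.fract_lt_one (a / (2*P))
    constructor
    · rintro ⟨-, hlt⟩
      have : Int.fract (a / (2*P)) < 1/2 := by nlinarith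
      have := (fract_lt_half_iff _).mp this
      rw [hq] at this
      exact this
    · intro hev
      have : Even ⌊2 * (a / (2*P))⌋ := by rw [hq]; exact hev
      have hlt := (fract_lt_half_iff _).mpr this
      constructor
      · positivity
      · nlinarith
  rw [hGt]
  exact if_congr hcond rfl rfl

lemma nval_step (θ α : ℝ) (W : ℤ → ℝ) (hW : ∀ j, W j = -1 ∨ W j = 1)
    (G : ℤ → ℝ) (t : ℤ)
    (hGt : G t = if realMod (α - Spart θ W t + (2:ℝ) ^ ((t:ℝ) + θ - 1))
          ((2:ℝ) ^ ((t:ℝ) + θ + 1)) ∈ Set.Ico (0:ℝ) ((2:ℝ) ^ ((t:ℝ) + θ))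
        then W t else -W t) :
    ((nval θ α W t : ℤ) : ℝ) = (W t - G t)/2 + 2 * ((nval θ α W (t+1) : ℤ) : ℝ) := by
  have hGc := G_char θ α W G t hGt
  have := step_aux (xval θ α W t) (W t) (G t) (hW t) (by rw [hGc]; rfl)
  have h2 : nval θ α W (t+1) = ⌊xval θ α W t / 2 - W t / 4 + 1/2⌋ := by
    unfold nval
    rw [xval_succ θ α W hW t]
  rw [h2]
  exact this

theorem stmt3 (θ : ℝ) (hθ : θ ∈ Set.Icc (0:ℝ) 1) (α : ℝ) (W : ℤ → ℝ)
    (hW : ∀ j, W j = -1 ∨ W j = 1)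
    (hWp : ∀ n : ℤ, ∃ j ≥ n, W j = 1) (hWm : ∀ n : ℤ, ∃ j ≥ n, W j = -1)
    (G : ℤ → ℝ)
    (hG : ∀ j : ℤ, G j =
      if realMod (α - (∑' k : ℤ, if k < j then W k * (2:ℝ) ^ ((k:ℝ) + θ - 1) else 0)
            + (2:ℝ) ^ ((j:ℝ) + θ - 1)) ((2:ℝ) ^ ((j:ℝ) + θ + 1))
          ∈ Set.Ico (0:ℝ) ((2:ℝ) ^ ((j:ℝ) + θ))
        then W j else -W j) :
    ∀ j : ℤ,
      (⌊(2:ℝ) ^ (-((j:ℝ) + θ)) *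
          (α - (∑' k : ℤ, if k < j then W k * (2:ℝ) ^ ((k:ℝ) + θ - 1) else 0)) + 1/2⌋ : ℝ)
        = ∑' k : ℤ, if j ≤ k then (W k - G k) * (2:ℝ) ^ (k - j - 1) else 0 := by
  have hθ0 : 0 ≤ θ := hθ.1
  have hSp : ∀ j : ℤ, (∑' k : ℤ, if k < j then W k * (2:ℝ) ^ ((k:ℝ) + θ - 1) else 0)
      = Spart θ W j := fun _ => rfl
  simp only [hSp] at hG ⊢
  intro j
  -- the step recursion
  have hstep : ∀ t : ℤ, ((nval θ α W t : ℤ) : ℝ)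
      = (W t - G t)/2 + 2 * ((nval θ α W (t+1) : ℤ) : ℝ) :=
    fun t => nval_step θ α W hW G t (hG t)
  have hGc : ∀ t : ℤ, G t = if Even (nval θ α W t) then W t else -W t :=
    fun t => G_char θ α W G t (hG t)
  -- telescoping
  have htel : ∀ N : ℤ, j ≤ N → ((nval θ α W j : ℤ) : ℝ)
      = (∑ k ∈ Finset.Ico j N, (W k - G k) * (2:ℝ) ^ (k - j - 1))
        + (2:ℝ) ^ (N - j) * ((nval θ α W N : ℤ) : ℝ) := by
    refine Int.le_induction ?_ ?_
    · simp
    · intro N hN ih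
      have hins : Finset.Ico j (N+1) = insert N (Finset.Ico j N) := by
        ext k; simp only [Finset.mem_Ico, Finset.mem_insert]; omega
      rw [hins, Finset.sum_insert (by simp)]
      have e1 : (2:ℝ) ^ (N - j - 1) = (2:ℝ) ^ (N - j) / 2 := by
        rw [zpow_sub_one₀ (two_ne_zero)]; ring
      have e2 : (2:ℝ) ^ (N + 1 - j) = (2:ℝ) ^ (N - j) * 2 := by
        rw [show N + 1 - j = (N - j) + 1 by ring, zpow_add_one₀ two_ne_zero]
      rw [ih, hstep N, e1, e2]
      ring
  -- eventually nval = 0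
  have hvanish : ∃ N : ℤ, j < N ∧ ∀ k : ℤ, N ≤ k → nval θ α W k = 0 := by
    obtain ⟨n0, hn0⟩ : ∃ n0 : ℕ, |α| < 2^n0 := pow_unbounded_of_one_lt |α| one_lt_two
    have hαb : |α| < (2:ℝ) ^ (((n0:ℤ):ℝ) + θ) := by
      calc |α| < (2:ℝ)^n0 := hn0
        _ = (2:ℝ) ^ ((n0:ℝ)) := by rw [Real.rpow_natCast]
        _ ≤ (2:ℝ) ^ ((n0:ℝ) + θ) :=
          Real.rpow_le_rpow_of_exponent_le one_le_two (by linarith)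
        _ = (2:ℝ) ^ (((n0:ℤ):ℝ) + θ) := by push_cast; ring
    obtain ⟨j1, hj1ge, hWj1⟩ := hWp (max (n0:ℤ) (j+1))
    obtain ⟨j2, hj2ge, hWj2⟩ := hWm (max (n0:ℤ) (j+1))
    set N : ℤ := max j1 j2 + 1 with hNdef
    have hj1N : j1 < N := by omega
    have hj2N : j2 < N := by omega
    have hjN : j < N := by omega
    have hmono : ∀ m : ℤ, (n0:ℤ) ≤ m → (2:ℝ) ^ (((n0:ℤ):ℝ) + θ) ≤ (2:ℝ) ^ ((m:ℝ) + θ) := by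
      intro m hm
      exact Real.rpow_le_rpow_of_exponent_le one_le_two
        (by have : ((n0:ℤ):ℝ) ≤ (m:ℝ) := Int.cast_le.mpr hm; linarith)
    have hub := Spart_le θ W hW j2 N hj2N hWj2
    have hlb := Spart_ge θ W hW j1 N hj1N hWj1
    have h1 : 2 * (2:ℝ) ^ ((j1:ℝ) + θ - 1) = (2:ℝ) ^ ((j1:ℝ) + θ) := by
      rw [rpow_pred']; ring
    have h2 : 2 * (2:ℝ) ^ ((j2:ℝ) + θ - 1) = (2:ℝ) ^ ((j2:ℝ) + θ) := by
      rw [rpow_pred']; ring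
    have hm1 := hmono j1 (by omega)
    have hm2 := hmono j2 (by omega)
    have habs1 : α ≤ |α| := le_abs_self α
    have habs2 : -|α| ≤ α := neg_abs_le α
    -- |α - S N| < 2^{N+θ-1}
    have hupper : α - Spart θ W N < (2:ℝ) ^ ((N:ℝ) + θ - 1) := by linarith
    have hlower : -(2:ℝ) ^ ((N:ℝ) + θ - 1) < α - Spart θ W N := by linarith
    have hPN : (0:ℝ) < (2:ℝ) ^ ((N:ℝ) + θ) := Real.rpow_pos_of_pos two_pos _
    have hhalf : (2:ℝ) ^ ((N:ℝ) + θ - 1) = (2:ℝ) ^ ((N:ℝ) + θ) / 2 := rpow_pred' _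
    have hxN1 : xval θ α W N < 1/2 := by
      rw [xval_eq, div_lt_iff₀ hPN]
      nlinarith
    have hxN2 : -(1/2) < xval θ α W N := by
      rw [xval_eq, lt_div_iff₀ hPN]
      nlinarith
    have hnN : nval θ α W N = 0 := by
      unfold nval
      rw [Int.floor_eq_iff]
      push_cast
      constructor <;> linarith
    refine ⟨N, hjN, ?_⟩
    refine Int.le_induction hnN ?_
    intro k hk ihk
    have hGk : G k = W k := by
      rw [hGc k, if_pos (by rw [ihk]; exact Even.zero)]
    have := hstep k
    rw [ihk, hGk] at this
    have : ((nval θ α W (k+1) : ℤ) : ℝ) = 0 := by push_cast at this ⊢; linarith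
    exact_mod_cast this
  obtain ⟨N, hjN, hper⟩ := hvanish
  have hGW : ∀ k : ℤ, N ≤ k → G k = W k := by
    intro k hk
    rw [hGc k, if_pos (by rw [hper k hk]; exact Even.zero)]
  -- the RHS is a finite sum
  have hhz : ∀ k ∉ Finset.Ico j N, (if j ≤ k then (W k - G k) * (2:ℝ) ^ (k - j - 1) else 0) = 0 := by
    intro k hk
    rw [Finset.mem_Ico] at hk
    by_cases hjk : j ≤ k
    · have hNk : N ≤ k := by omega
      rw [if_pos hjk, hGW k hNk]
      ring
    · rw [if_neg hjk]
  rw [tsum_eq_sum hhz]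
  have hsumeq : (∑ k ∈ Finset.Ico j N, if j ≤ k then (W k - G k) * (2:ℝ) ^ (k - j - 1) else 0)
      = ∑ k ∈ Finset.Ico j N, (W k - G k) * (2:ℝ) ^ (k - j - 1) := by
    refine Finset.sum_congr rfl ?_
    intro k hk
    rw [Finset.mem_Ico] at hk
    rw [if_pos hk.1]
  rw [hsumeq]
  have := htel N (le_of_lt hjN)
  rw [hper N le_rfl] at this
  push_cast at this
  rw [show (⌊(2:ℝ) ^ (-((j:ℝ) + θ)) * (α - Spart θ W j) + 1/2⌋ : ℤ) = nval θ α W j from rfl]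
  rw [this]
  ring
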